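/- Let D be a strong generalized sum of two vertex-disjoint digraphs D₁, D₂ each containing a Hamiltonian cycle (C₁ and C₂ respectively). If D contains no good pair of arcs between C₁ and C₂, then D is vertex-pancyclic: for every vertex v of D and every k with 3 ≤ k ≤ |V(D)|, D contains a directed cycle of length k through v. -/

import Mathlib

/-- A directed cycle of length `k` passing through `v` in the digraph with arc relation `A`. -/
def CycleThru {V : Type*} (A : V → V → Prop) (k : ℕ) (v : V) : Prop :=
  ∃ z : ZMod k → V, Function.Injective z ∧ (∀ i, A (z i) (z (i + 1))) ∧ ∃ i, z i = v

section Seg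

variable {V : Type*} (A : V → V → Prop)

/-- a segment of the cycle `w`, starting at `sb + base`, with `t+1` vertices -/
def seg {N : ℕ} (w : ZMod N → V) (sb : ZMod N) (base t : ℕ) : List V :=
  (List.range (t+1)).map fun o => w (sb + ((base + o : ℕ) : ZMod N))

variable {N : ℕ} (w : ZMod N → V) (sb : ZMod N) (base t : ℕ)

lemma seg_length : (seg w sb base t).length = t + 1 := by
  simp [seg]

lemma seg_ne_nil : seg w sb base t ≠ [] := by
  simp [seg, List.range_succ]

lemma seg_head? : (seg w sb base t).head? = some (w (sb + ((base : ℕ) : ZMod N))) := by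
  simp [seg, List.range_succ_eq_map]

lemma seg_getLast? : (seg w sb base t).getLast? = some (w (sb + ((base + t : ℕ) : ZMod N))) := by
  simp [seg, List.range_succ]

lemma seg_mem {v : V} (hv : v ∈ seg w sb base t) : ∃ i, v = w i := by
  simp only [seg, List.mem_map] at hv
  obtain ⟨o, -, rfl⟩ := hv
  exact ⟨_, rfl⟩

lemma mem_seg_self : w (sb + ((base : ℕ) : ZMod N)) ∈ seg w sb base t := by
  simp only [seg, List.mem_map]
  exact ⟨0, by simp, by simp⟩

lemma seg_chain (hcyc : ∀ i, A (w i) (w (i+1))) :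
    (seg w sb base t).Chain' A := by
  rw [seg]; show List.IsChain A _; rw [List.isChain_map, List.isChain_range_succ]
  intro i _
  have h : ((base + (i+1) : ℕ) : ZMod N) = ((base + i : ℕ) : ZMod N) + 1 := by push_cast; ring
  rw [h, ← add_assoc]
  exact hcyc _

lemma seg_nodup (hw : Function.Injective w) (hlt : base + t < N) :
    (seg w sb base t).Nodup := by
  haveI : NeZero N := ⟨by omega⟩
  refine List.Nodup.map_on ?_ List.nodup_range
  intro i hi j hj h
  simp only [List.mem_range] at hi hj
  have h2 : ((base + i : ℕ) : ZMod N) = ((base + j : ℕ) : ZMod N) :=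
    add_left_cancel (hw h)
  have h3 := congrArg ZMod.val h2
  rw [ZMod.val_natCast_of_lt (by omega), ZMod.val_natCast_of_lt (by omega)] at h3
  omega

lemma seg_disjoint_of_lt (hw : Function.Injective w) {base' t' : ℕ}
    (h1 : base + t < base') (h2 : base' + t' < N) :
    (seg w sb base t).Disjoint (seg w sb base' t') := by
  haveI : NeZero N := ⟨by omega⟩
  intro v hv hv'
  simp only [seg, List.mem_map, List.mem_range] at hv hv'
  obtain ⟨o, ho, rfl⟩ := hv
  obtain ⟨o', ho', h⟩ := hv'
  have h2' : ((base' + o' : ℕ) : ZMod N) = ((base + o : ℕ) : ZMod N) :=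
    add_left_cancel (hw h)
  have h3 := congrArg ZMod.val h2'
  rw [ZMod.val_natCast_of_lt (by omega), ZMod.val_natCast_of_lt (by omega)] at h3
  omega

lemma seg_disjoint_of_ne {M : ℕ} {w' : ZMod M → V} {sb' : ZMod M} {base' t' : ℕ}
    (hne : ∀ i j, w i ≠ w' j) :
    (seg w sb base t).Disjoint (seg w' sb' base' t') := by
  intro v hv hv'
  obtain ⟨i, rfl⟩ := seg_mem w sb base t hv
  obtain ⟨j, hj⟩ := seg_mem w' sb' base' t' hv'
  exact hne i j hj

end Seg

/-- Bridge: a nonempty nodup cyclically-chained list gives a `CycleThru`. -/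
lemma cycleThru_of_list {V : Type*} {A : V → V → Prop} {k : ℕ} (hk : 3 ≤ k)
    {l : List V} (hlen : l.length = k) (hnd : l.Nodup) (hch : l.Chain' A)
    (hnil : l ≠ [])
    (hlast : A (l.getLast hnil) (l.head hnil)) {v : V} (hv : v ∈ l) :
    CycleThru A k v := by
  haveI : NeZero k := ⟨by omega⟩
  haveI : Fact (1 < k) := ⟨by omega⟩
  refine ⟨fun i => l[i.val]'(by rw [hlen]; exact i.val_lt), ?_, ?_, ?_⟩
  · intro i j h
    exact ZMod.val_injective _ ((List.Nodup.getElem_inj_iff hnd).mp h)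
  · intro i
    have hadd : (i + 1).val = (i.val + 1) % k := by
      rw [ZMod.val_add, ZMod.val_one]
    rcases Nat.lt_or_ge (i.val + 1) k with h | h
    · have hv1 : (i+1).val = i.val + 1 := by rw [hadd, Nat.mod_eq_of_lt h]
      have hch' := List.isChain_iff_getElem.mp hch i.val (by rw [hlen]; omega)
      convert hch' using 2
    · have hik : i.val = k - 1 := by have := i.val_lt; omega
      have hv0 : (i+1).val = 0 := by rw [hadd, hik]; simp [Nat.sub_add_cancel (by omega : 1 ≤ k)]
      have hg1 : l[i.val]'(by rw [hlen]; exact i.val_lt) = l.getLast hnil := by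
        rw [List.getLast_eq_getElem]
        congr 1
        rw [hlen, hik]
      have hg2 : l[(i+1).val]'(by rw [hlen]; exact (i+1).val_lt) = l.head hnil := by
        rw [List.head_eq_getElem_zero]
        congr 1
      show A (l[i.val]'(by rw [hlen]; exact i.val_lt)) (l[(i+1).val]'(by rw [hlen]; exact (i+1).val_lt))
      rw [hg1, hg2]
      exact hlast
  · rw [List.mem_iff_getElem] at hv
    obtain ⟨idx, hlt, hidx⟩ := hv
    refine ⟨(idx : ZMod k), ?_⟩
    have hval : ((idx : ℕ) : ZMod k).val = idx := ZMod.val_natCast_of_lt (by omega)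
    show l[((idx : ℕ) : ZMod k).val]'(by rw [hlen]; exact ZMod.val_lt _) = v
    simp only [hval]
    exact hidx

section Construct

variable {V : Type*} {A : V → V → Prop} {n m : ℕ}
  {x : ZMod n → V} {y : ZMod m → V}

/-- One-crossing-pair cycle: x-segment of length a+1, then y-segment of length b+1. -/
lemma construct1 (hxinj : Function.Injective x) (hyinj : Function.Injective y)
    (hxcyc : ∀ i, A (x i) (x (i + 1))) (hycyc : ∀ i, A (y i) (y (i + 1)))
    (hdisj : ∀ s t, x s ≠ y t)
    (s : ZMod n) (r : ZMod m) (a b : ℕ) (hab : 1 ≤ a + b)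
    (ha : a + 1 ≤ n) (hb : b + 1 ≤ m)
    (h1 : A (x (s + (a : ZMod n))) (y r))
    (h2 : A (y (r + (b : ZMod m))) (x s)) :
    CycleThru A (a + b + 2) (x s) := by
  set l : List V := seg x s 0 a ++ seg y r 0 b with hl
  have hnil : l ≠ [] := by
    simp [hl, seg_ne_nil]
  have hlast? : l.getLast? = some (y (r + (b : ZMod m))) := by
    rw [hl, List.getLast?_append, seg_getLast?, Option.some_or]
    norm_num
  have hhead? : l.head? = some (x s) := by
    rw [hl, List.head?_append, seg_head?, Option.some_or]
    norm_num
  have hlast := List.getLast?_eq_getLast hnil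
  rw [hlast?] at hlast
  have hhead := List.head?_eq_head hnil
  rw [hhead?] at hhead
  refine cycleThru_of_list (by omega) ?_ ?_ ?_ hnil ?_ ?_
  · rw [hl, List.length_append, seg_length, seg_length]; omega
  · rw [hl, List.nodup_append']
    exact ⟨seg_nodup _ _ _ _ hxinj (by omega), seg_nodup _ _ _ _ hyinj (by omega),
      seg_disjoint_of_ne _ _ _ _ hdisj⟩
  · rw [hl]
    refine List.IsChain.append (seg_chain A x s 0 a hxcyc) (seg_chain A y r 0 b hycyc) ?_
    intro p hp q hq
    rw [seg_getLast?, Option.mem_def, Option.some_inj] at hp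
    rw [seg_head?, Option.mem_def, Option.some_inj] at hq
    subst hp; subst hq
    simpa using h1
  · have e1 := Option.some_inj.mp hlast
    have e2 := Option.some_inj.mp hhead
    rw [← e1, ← e2]
    exact h2
  · rw [hl]
    apply List.mem_append_left
    simpa using mem_seg_self x s 0 a

/-- Two-crossing-pair cycle. -/
lemma construct2 (hxinj : Function.Injective x) (hyinj : Function.Injective y)
    (hxcyc : ∀ i, A (x i) (x (i + 1))) (hycyc : ∀ i, A (y i) (y (i + 1)))
    (hdisj : ∀ s t, x s ≠ y t)
    (s : ZMod n) (r : ZMod m) (a1 a2 b1 b2 γ1 δ1 : ℕ)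
    (hn : a1 + γ1 + a2 + 2 ≤ n) (hm : b1 + δ1 + b2 + 2 ≤ m)
    (h1 : A (x (s + ((a1 : ℕ) : ZMod n))) (y r))
    (h2 : A (y (r + ((b1 : ℕ) : ZMod m))) (x (s + ((a1 + 1 + γ1 : ℕ) : ZMod n))))
    (h3 : A (x (s + ((a1 + 1 + γ1 + a2 : ℕ) : ZMod n))) (y (r + ((b1 + 1 + δ1 : ℕ) : ZMod m))))
    (h4 : A (y (r + ((b1 + 1 + δ1 + b2 : ℕ) : ZMod m))) (x s)) :
    CycleThru A (a1 + a2 + b1 + b2 + 4) (x s) := by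
  set l : List V :=
    ((seg x s 0 a1 ++ seg y r 0 b1) ++ seg x s (a1+1+γ1) a2) ++ seg y r (b1+1+δ1) b2 with hl
  have hnil : l ≠ [] := by
    simp [hl, seg_ne_nil]
  have hlast? : l.getLast? = some (y (r + ((b1+1+δ1+b2 : ℕ) : ZMod m))) := by
    rw [hl, List.getLast?_append, seg_getLast?, Option.some_or]
  have hhead? : l.head? = some (x s) := by
    rw [hl, List.head?_append, List.head?_append, List.head?_append, seg_head?]
    simp
  have hlast := List.getLast?_eq_getLast hnil
  rw [hlast?] at hlast
  have hhead := List.head?_eq_head hnil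
  rw [hhead?] at hhead
  refine cycleThru_of_list (by omega) ?_ ?_ ?_ hnil ?_ ?_
  · rw [hl, List.length_append, List.length_append, List.length_append,
      seg_length, seg_length, seg_length, seg_length]; omega
  · have nd1 : (seg x s 0 a1).Nodup := seg_nodup _ _ _ _ hxinj (by omega)
    have nd2 : (seg y r 0 b1).Nodup := seg_nodup _ _ _ _ hyinj (by omega)
    have nd3 : (seg x s (a1+1+γ1) a2).Nodup := seg_nodup _ _ _ _ hxinj (by omega)
    have nd4 : (seg y r (b1+1+δ1) b2).Nodup := seg_nodup _ _ _ _ hyinj (by omega)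
    have d12 : (seg x s 0 a1).Disjoint (seg y r 0 b1) := seg_disjoint_of_ne _ _ _ _ hdisj
    have d13 : (seg x s 0 a1).Disjoint (seg x s (a1+1+γ1) a2) :=
      seg_disjoint_of_lt _ _ _ _ hxinj (by omega) (by omega)
    have d14 : (seg x s 0 a1).Disjoint (seg y r (b1+1+δ1) b2) := seg_disjoint_of_ne _ _ _ _ hdisj
    have d23 : (seg y r 0 b1).Disjoint (seg x s (a1+1+γ1) a2) :=
      seg_disjoint_of_ne _ _ _ _ (fun i j => (hdisj j i).symm)
    have d24 : (seg y r 0 b1).Disjoint (seg y r (b1+1+δ1) b2) :=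
      seg_disjoint_of_lt _ _ _ _ hyinj (by omega) (by omega)
    have d34 : (seg x s (a1+1+γ1) a2).Disjoint (seg y r (b1+1+δ1) b2) :=
      seg_disjoint_of_ne _ _ _ _ hdisj
    rw [hl]
    simp only [List.nodup_append', List.disjoint_append_left]
    tauto
  · rw [hl]
    refine List.IsChain.append (List.IsChain.append (List.IsChain.append
      (seg_chain A x s 0 a1 hxcyc) (seg_chain A y r 0 b1 hycyc) ?_)
      (seg_chain A x s (a1+1+γ1) a2 hxcyc) ?_)
      (seg_chain A y r (b1+1+δ1) b2 hycyc) ?_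
    · intro p hp q hq
      rw [seg_getLast?, Option.mem_def, Option.some_inj] at hp
      rw [seg_head?, Option.mem_def, Option.some_inj] at hq
      subst hp; subst hq
      simpa using h1
    · intro p hp q hq
      rw [List.getLast?_append, seg_getLast?, Option.some_or, Option.mem_def,
        Option.some_inj] at hp
      rw [seg_head?, Option.mem_def, Option.some_inj] at hq
      subst hp; subst hq
      simpa using h2
    · intro p hp q hq
      rw [List.getLast?_append, seg_getLast?, Option.some_or, Option.mem_def,
        Option.some_inj] at hp
      rw [seg_head?, Option.mem_def, Option.some_inj] at hq
      subst hp; subst hq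
      simpa using h3
  · have e1 := Option.some_inj.mp hlast
    have e2 := Option.some_inj.mp hhead
    rw [← e1, ← e2]
    exact h4
  · rw [hl]
    apply List.mem_append_left
    apply List.mem_append_left
    apply List.mem_append_left
    simpa using mem_seg_self x s 0 a1

end Construct

/-- In a cyclic group, a nonconstant predicate has a "fall". -/
lemma exists_fall {g : ℕ} [NeZero g] (f : ZMod g → Prop) {e1 e2 : ZMod g}
    (h1 : f e1) (h2 : ¬ f e2) : ∃ c, f c ∧ ¬ f (c + 1) := by
  by_contra h
  push_neg at h
  have key : ∀ t : ℕ, f (e1 + (t : ZMod g)) := by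
    intro t
    induction t with
    | zero => simpa using h1
    | succ t ih =>
      have : e1 + ((t+1 : ℕ) : ZMod g) = (e1 + (t : ZMod g)) + 1 := by push_cast; ring
      rw [this]
      exact h _ ih
  apply h2
  have : e1 + (((e2 - e1).val : ℕ) : ZMod g) = e2 := by
    rw [ZMod.natCast_rightInverse (e2 - e1)]
    ring
  rw [← this]
  exact key _

lemma exists_rise {g : ℕ} [NeZero g] (f : ZMod g → Prop) {e1 e2 : ZMod g}
    (h1 : f e1) (h2 : ¬ f e2) : ∃ d, ¬ f d ∧ f (d + 1) := by
  obtain ⟨c, hc, hc1⟩ := exists_fall (fun w => ¬ f w) h2 (not_not_intro h1)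
  exact ⟨c, hc, not_not.mp hc1⟩

/-- Arithmetic coverage: every admissible length is realized by a 1-pair or 2-pair shape. -/
lemma coverage {g n m k : ℕ} (hg : 2 ≤ g) (hgn : g ∣ n) (hgm : g ∣ m)
    (hn : 2 ≤ n) (hm : 2 ≤ m) (hk3 : 3 ≤ k) (hk : k ≤ n + m) :
    (∃ a b : ℕ, a + b + 2 = k ∧ a + 1 ≤ n ∧ b + 1 ≤ m ∧
      ((b : ZMod g) = (a : ZMod g) + 1 ∨ (a : ZMod g) = (b : ZMod g) + 1))
    ∨ (∃ A B : ℕ, A + B + 4 = k ∧ A + 2 ≤ n ∧ B + 2 ≤ m ∧ (A : ZMod g) = (B : ZMod g)) := by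
  have hgn' : g ≤ n := Nat.le_of_dvd (by omega) hgn
  have hgm' : g ≤ m := Nat.le_of_dvd (by omega) hgm
  have cn : ((n : ℕ) : ZMod g) = 0 := (ZMod.natCast_eq_zero_iff n g).mpr hgn
  have cm : ((m : ℕ) : ZMod g) = 0 := (ZMod.natCast_eq_zero_iff m g).mpr hgm
  rcases le_or_gt k (min n m + 1) with hZA | hZA
  · -- Zone A : small k, balanced solution
    rcases Nat.even_or_odd k with ⟨j, hj⟩ | ⟨j, hj⟩
    · right
      exact ⟨j - 2, j - 2, by omega, by omega, by omega, rfl⟩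
    · left
      refine ⟨j - 1, j, by omega, by omega, by omega, Or.inl ?_⟩
      have hj1 : j = (j - 1) + 1 := by omega
      rw [hj1]
      push_cast
      ring
  · rcases le_or_gt (max n m + 1) k with hZC | hZC
    · -- Zone C : large k
      rcases Nat.even_or_odd (n + m - k) with ⟨j, hj⟩ | ⟨j, hj⟩
      · right
        obtain ⟨A, hA⟩ : ∃ A, A + 2 + j = n := ⟨n - 2 - j, by omega⟩
        obtain ⟨B, hB⟩ : ∃ B, B + 2 + j = m := ⟨m - 2 - j, by omega⟩
        refine ⟨A, B, by omega, by omega, by omega, ?_⟩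
        have e1 := congrArg (Nat.cast : ℕ → ZMod g) hA
        have e2 := congrArg (Nat.cast : ℕ → ZMod g) hB
        push_cast at e1 e2
        rw [cn] at e1
        rw [cm] at e2
        linear_combination e1 - e2
      · left
        obtain ⟨a, ha⟩ : ∃ a, a + 2 + j = n := ⟨n - 2 - j, by omega⟩
        obtain ⟨b, hb⟩ : ∃ b, b + 1 + j = m := ⟨m - 1 - j, by omega⟩
        refine ⟨a, b, by omega, by omega, by omega, Or.inl ?_⟩
        have e1 := congrArg (Nat.cast : ℕ → ZMod g) ha
        have e2 := congrArg (Nat.cast : ℕ → ZMod g) hb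
        push_cast at e1 e2
        rw [cn] at e1
        rw [cm] at e2
        linear_combination e2 - e1
    · -- Zone B : min + 2 ≤ k ≤ max
      have hkminmax : min n m + 2 ≤ k ∧ k ≤ max n m := by omega
      rcases le_total m n with hmn | hnm
      · -- m ≤ n, so m + 2 ≤ k ≤ n
        have hkm : m + 2 ≤ k := by omega
        have hkn : k ≤ n := by omega
        rcases Nat.even_or_odd g with ⟨h, hh⟩ | ⟨h, hh⟩
        · -- g even
          rcases Nat.even_or_odd k with ⟨j, hj⟩ | ⟨j, hj⟩
          · -- k even : S2 with B := (j-2) % h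
            right
            set B := (j - 2) % h with hB
            have hBlt : B < h := Nat.mod_lt _ (by omega)
            refine ⟨k - 4 - B, B, by omega, by omega, by omega, ?_⟩
            have hmod : 2 * B ≡ k - 4 [MOD g] := by
              have h1 : 2 * ((j-2) % h) ≡ 2 * (j - 2) [MOD 2 * h] :=
                (Nat.mod_modEq _ h).mul_left' 2
              have h2 : 2 * (j - 2) = k - 4 := by omega
              have h3 : g = 2 * h := by omega
              rw [h3, ← h2]
              exact h1
            have hcast := (ZMod.natCast_eq_natCast_iff _ _ _).mpr hmod
            push_cast at hcast
            have hks : ((k - 4 : ℕ) : ZMod g) = (k : ZMod g) - 4 := by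
              rw [Nat.cast_sub (by omega)]; norm_num
            rw [hks] at hcast
            have hA : ((k - 4 - B : ℕ) : ZMod g) = (k : ZMod g) - 4 - B := by
              rw [Nat.cast_sub (by omega), Nat.cast_sub (by omega)]; norm_num
            rw [hA]
            linear_combination -hcast
          · -- k odd : S1 with b := j % h, 2b ≡ k-1
            left
            set b := j % h with hbdef
            have hblt : b < h := Nat.mod_lt _ (by omega)
            refine ⟨k - 2 - b, b, by omega, by omega, by omega, Or.inl ?_⟩
            have hmod : 2 * b ≡ k - 1 [MOD g] := by
              have h1 : 2 * (j % h) ≡ 2 * j [MOD 2 * h] :=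
                (Nat.mod_modEq _ h).mul_left' 2
              have h2 : 2 * j = k - 1 := by omega
              have h3 : g = 2 * h := by omega
              rw [h3, ← h2]
              exact h1
            have hcast := (ZMod.natCast_eq_natCast_iff _ _ _).mpr hmod
            push_cast at hcast
            have hks : ((k - 1 : ℕ) : ZMod g) = (k : ZMod g) - 1 := by
              rw [Nat.cast_sub (by omega)]; norm_num
            rw [hks] at hcast
            have hA : ((k - 2 - b : ℕ) : ZMod g) = (k : ZMod g) - 2 - b := by
              rw [Nat.cast_sub (by omega), Nat.cast_sub (by omega)]; norm_num
            rw [hA]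
            linear_combination hcast
        · -- g odd : S1 with b := ((h+1)*(k-1)) % g
          left
          set b := ((h + 1) * (k - 1)) % g with hbdef
          have hblt : b < g := Nat.mod_lt _ (by omega)
          refine ⟨k - 2 - b, b, by omega, by omega, by omega, Or.inl ?_⟩
          have hmod : 2 * b ≡ k - 1 [MOD g] := by
            calc 2 * b ≡ 2 * ((h + 1) * (k - 1)) [MOD g] :=
                  Nat.ModEq.mul_left 2 (Nat.mod_modEq _ g)
            _ = (g + 1) * (k - 1) := by rw [hh]; ring
            _ ≡ 1 * (k - 1) [MOD g] := Nat.ModEq.mul_right _ (Nat.add_mod_left g 1)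
            _ = k - 1 := one_mul _
          have hcast := (ZMod.natCast_eq_natCast_iff _ _ _).mpr hmod
          push_cast at hcast
          have hks : ((k - 1 : ℕ) : ZMod g) = (k : ZMod g) - 1 := by
            rw [Nat.cast_sub (by omega)]; norm_num
          rw [hks] at hcast
          have hA : ((k - 2 - b : ℕ) : ZMod g) = (k : ZMod g) - 2 - b := by
            rw [Nat.cast_sub (by omega), Nat.cast_sub (by omega)]; norm_num
          rw [hA]
          linear_combination hcast
      · -- n ≤ m, so n + 2 ≤ k ≤ m
        have hkn : n + 2 ≤ k := by omega
        have hkm : k ≤ m := by omega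
        rcases Nat.even_or_odd g with ⟨h, hh⟩ | ⟨h, hh⟩
        · rcases Nat.even_or_odd k with ⟨j, hj⟩ | ⟨j, hj⟩
          · -- k even : S2 with A := (j-2) % h
            right
            set Aa := (j - 2) % h with hAdef
            have hAlt : Aa < h := Nat.mod_lt _ (by omega)
            refine ⟨Aa, k - 4 - Aa, by omega, by omega, by omega, ?_⟩
            have hmod : 2 * Aa ≡ k - 4 [MOD g] := by
              have h1 : 2 * ((j-2) % h) ≡ 2 * (j - 2) [MOD 2 * h] :=
                (Nat.mod_modEq _ h).mul_left' 2
              have h2 : 2 * (j - 2) = k - 4 := by omega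
              have h3 : g = 2 * h := by omega
              rw [h3, ← h2]
              exact h1
            have hcast := (ZMod.natCast_eq_natCast_iff _ _ _).mpr hmod
            push_cast at hcast
            have hks : ((k - 4 : ℕ) : ZMod g) = (k : ZMod g) - 4 := by
              rw [Nat.cast_sub (by omega)]; norm_num
            rw [hks] at hcast
            have hB : ((k - 4 - Aa : ℕ) : ZMod g) = (k : ZMod g) - 4 - Aa := by
              rw [Nat.cast_sub (by omega), Nat.cast_sub (by omega)]; norm_num
            rw [hB]
            linear_combination hcast
          · -- k odd : S1 with a := (j-1) % h, 2a ≡ k-3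
            left
            set a := (j - 1) % h with hadef
            have halt : a < h := Nat.mod_lt _ (by omega)
            refine ⟨a, k - 2 - a, by omega, by omega, by omega, Or.inl ?_⟩
            have hmod : 2 * a ≡ k - 3 [MOD g] := by
              have h1 : 2 * ((j-1) % h) ≡ 2 * (j - 1) [MOD 2 * h] :=
                (Nat.mod_modEq _ h).mul_left' 2
              have h2 : 2 * (j - 1) = k - 3 := by omega
              have h3 : g = 2 * h := by omega
              rw [h3, ← h2]
              exact h1
            have hcast := (ZMod.natCast_eq_natCast_iff _ _ _).mpr hmod
            push_cast at hcast
            have hks : ((k - 3 : ℕ) : ZMod g) = (k : ZMod g) - 3 := by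
              rw [Nat.cast_sub (by omega)]; norm_num
            rw [hks] at hcast
            have hB : ((k - 2 - a : ℕ) : ZMod g) = (k : ZMod g) - 2 - a := by
              rw [Nat.cast_sub (by omega), Nat.cast_sub (by omega)]; norm_num
            rw [hB]
            linear_combination -hcast
        · -- g odd : S1 with a := ((h+1)*(k-3)) % g, 2a ≡ k-3
          left
          set a := ((h + 1) * (k - 3)) % g with hadef
          have halt : a < g := Nat.mod_lt _ (by omega)
          refine ⟨a, k - 2 - a, by omega, by omega, by omega, Or.inl ?_⟩
          have hmod : 2 * a ≡ k - 3 [MOD g] := by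
            calc 2 * a ≡ 2 * ((h + 1) * (k - 3)) [MOD g] :=
                  Nat.ModEq.mul_left 2 (Nat.mod_modEq _ g)
            _ = (g + 1) * (k - 3) := by rw [hh]; ring
            _ ≡ 1 * (k - 3) [MOD g] := Nat.ModEq.mul_right _ (Nat.add_mod_left g 1)
            _ = k - 3 := one_mul _
          have hcast := (ZMod.natCast_eq_natCast_iff _ _ _).mpr hmod
          push_cast at hcast
          have hks : ((k - 3 : ℕ) : ZMod g) = (k : ZMod g) - 3 := by
            rw [Nat.cast_sub (by omega)]; norm_num
          rw [hks] at hcast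
          have hB : ((k - 2 - a : ℕ) : ZMod g) = (k : ZMod g) - 2 - a := by
            rw [Nat.cast_sub (by omega), Nat.cast_sub (by omega)]; norm_num
          rw [hB]
          linear_combination -hcast

section Key

variable {V : Type*} {A : V → V → Prop} {n m g : ℕ}

/-- Main construction lemma: cycles of every admissible length through a given x-vertex. -/
lemma key (hn : 2 ≤ n) (hm : 2 ≤ m) (hg : 2 ≤ g) (hgn : g ∣ n) (hgm : g ∣ m)
    {x : ZMod n → V} {y : ZMod m → V}
    (hxinj : Function.Injective x) (hyinj : Function.Injective y)
    (hxcyc : ∀ i, A (x i) (x (i + 1))) (hycyc : ∀ i, A (y i) (y (i + 1)))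
    (hdisj : ∀ s t, x s ≠ y t)
    (f : ZMod g → Prop)
    (harc : ∀ s r, A (x s) (y r) ↔
      f (ZMod.castHom hgn (ZMod g) s + ZMod.castHom hgm (ZMod g) r))
    (harc' : ∀ s r, A (y r) (x s) ↔
      ¬ f (ZMod.castHom hgn (ZMod g) s + ZMod.castHom hgm (ZMod g) r))
    (c d : ZMod g) (hc : f c) (hc1 : ¬ f (c + 1)) (hd : ¬ f d) (hd1 : f (d + 1)) :
    ∀ (s₀ : ZMod n) (k : ℕ), 3 ≤ k → k ≤ n + m → CycleThru A k (x s₀) := by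
  haveI : NeZero g := ⟨by omega⟩
  haveI : NeZero n := ⟨by omega⟩
  haveI : NeZero m := ⟨by omega⟩
  have hgn' : g ≤ n := Nat.le_of_dvd (by omega) hgn
  have hgm' : g ≤ m := Nat.le_of_dvd (by omega) hgm
  set φ : ZMod n →+* ZMod g := ZMod.castHom hgn (ZMod g) with hφ
  set ψ : ZMod m →+* ZMod g := ZMod.castHom hgm (ZMod g) with hψ
  have hψsur : ∀ w : ZMod g, ∃ r : ZMod m, ψ r = w := by
    intro w
    exact ⟨((w.val : ℕ) : ZMod m), by
      rw [hψ, map_natCast]; exact ZMod.natCast_rightInverse w⟩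
  intro s₀ k hk3 hknm
  rcases coverage hg hgn hgm hn hm hk3 hknm with
    ⟨a, b, habk, han, hbm, hcast⟩ | ⟨A₁, B₁, habk, han, hbm, hcast⟩
  · -- one-pair shape
    rcases hcast with hcast | hcast
    · obtain ⟨r, hr⟩ := hψsur (c - (a : ZMod g) - φ s₀)
      have h1 : A (x (s₀ + (a : ZMod n))) (y r) := by
        rw [harc, map_add, map_natCast, hr]
        have : φ s₀ + (a : ZMod g) + (c - (a : ZMod g) - φ s₀) = c := by ring
        rw [this]
        exact hc
      have h2 : A (y (r + (b : ZMod m))) (x s₀) := by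
        rw [harc', map_add, map_natCast, hr]
        have : φ s₀ + (c - (a : ZMod g) - φ s₀ + (b : ZMod g)) = c + 1 := by
          linear_combination hcast
        rw [this]
        exact hc1
      have := construct1 hxinj hyinj hxcyc hycyc hdisj s₀ r a b (by omega)
        han hbm h1 h2
      have hk' : a + b + 2 = k := habk
      exact hk' ▸ this
    · obtain ⟨r, hr⟩ := hψsur (d + 1 - (a : ZMod g) - φ s₀)
      have h1 : A (x (s₀ + (a : ZMod n))) (y r) := by
        rw [harc, map_add, map_natCast, hr]
        have : φ s₀ + (a : ZMod g) + (d + 1 - (a : ZMod g) - φ s₀) = d + 1 := by ring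
        rw [this]
        exact hd1
      have h2 : A (y (r + (b : ZMod m))) (x s₀) := by
        rw [harc', map_add, map_natCast, hr]
        have : φ s₀ + (d + 1 - (a : ZMod g) - φ s₀ + (b : ZMod g)) = d := by
          linear_combination - hcast
        rw [this]
        exact hd
      have := construct1 hxinj hyinj hxcyc hycyc hdisj s₀ r a b (by omega)
        han hbm h1 h2
      have hk' : a + b + 2 = k := habk
      exact hk' ▸ this
  · -- two-pair shape
    set e₀ : ℕ := (d - c - 1).val with he₀def
    have he₀cast : ((e₀ : ℕ) : ZMod g) = d - c - 1 := ZMod.natCast_rightInverse _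
    have he₀lt : e₀ < g := ZMod.val_lt _
    have he₀ne : e₀ ≠ g - 1 := by
      intro hcontra
      have : ((e₀ : ℕ) : ZMod g) = -1 := by
        rw [hcontra, Nat.cast_sub (by omega), ZMod.natCast_self]
        ring
      rw [he₀cast] at this
      have hdc : d = c := by linear_combination this
      rw [hdc] at hd
      exact hd hc
    have he₀le : e₀ ≤ g - 2 := by omega
    by_cases hcase : e₀ + B₁ + 2 ≤ A₁ + m
    · -- pattern P2a
      set δ1 := min e₀ (m - (B₁ + 2)) with hδ1
      set a2 := e₀ - δ1 with ha2
      set a1 := A₁ - a2 with ha1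
      have ha2A : a2 ≤ A₁ := by omega
      have hsplit : a2 + δ1 = e₀ := by omega
      obtain ⟨r, hr⟩ := hψsur (c - (a1 : ZMod g) - φ s₀)
      have hA12 : ((a1 : ℕ) : ZMod g) + ((a2 : ℕ) : ZMod g) = ((A₁ : ℕ) : ZMod g) := by
        rw [← Nat.cast_add]
        congr 1
        omega
      have hsplitc : ((a2 : ℕ) : ZMod g) + ((δ1 : ℕ) : ZMod g) = d - c - 1 := by
        rw [← Nat.cast_add, hsplit, he₀cast]
      have h1 : A (x (s₀ + ((a1 : ℕ) : ZMod n))) (y r) := by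
        rw [harc, map_add, map_natCast, hr]
        have : φ s₀ + (a1 : ZMod g) + (c - (a1 : ZMod g) - φ s₀) = c := by ring
        rw [this]
        exact hc
      have h2 : A (y (r + ((0 : ℕ) : ZMod m))) (x (s₀ + ((a1 + 1 + 0 : ℕ) : ZMod n))) := by
        rw [harc', map_add, map_natCast, map_add, map_natCast, hr]
        have : φ s₀ + ((a1 + 1 + 0 : ℕ) : ZMod g) + (c - (a1 : ZMod g) - φ s₀ + ((0:ℕ) : ZMod g))
            = c + 1 := by push_cast; ring
        rw [this]
        exact hc1
      have h3 : A (x (s₀ + ((a1 + 1 + 0 + a2 : ℕ) : ZMod n))) (y (r + ((0 + 1 + δ1 : ℕ) : ZMod m))) := by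
        rw [harc, map_add, map_natCast, map_add, map_natCast, hr]
        have : φ s₀ + ((a1 + 1 + 0 + a2 : ℕ) : ZMod g) +
            (c - (a1 : ZMod g) - φ s₀ + ((0 + 1 + δ1 : ℕ) : ZMod g)) = d + 1 := by
          push_cast
          push_cast at hsplitc
          linear_combination hsplitc
        rw [this]
        exact hd1
      have h4 : A (y (r + ((0 + 1 + δ1 + B₁ : ℕ) : ZMod m))) (x s₀) := by
        rw [harc', map_add, map_natCast, hr]
        have : φ s₀ + (c - (a1 : ZMod g) - φ s₀ + ((0 + 1 + δ1 + B₁ : ℕ) : ZMod g)) = d := by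
          push_cast
          push_cast at hsplitc hA12 hcast
          linear_combination hsplitc - hcast - hA12
        rw [this]
        exact hd
      have := construct2 hxinj hyinj hxcyc hycyc hdisj s₀ r a1 a2 0 B₁ 0 δ1
        (by omega) (by omega) h1 h2 h3 h4
      have hk' : a1 + a2 + 0 + B₁ + 4 = k := by omega
      exact hk' ▸ this
    · -- pattern P2b
      have hroom : e₀ ≤ B₁ + (n - 2 - A₁) := by omega
      set γ1 := min e₀ (n - (A₁ + 2)) with hγ1
      set b1 := e₀ - γ1 with hb1
      have hb1B : b1 ≤ B₁ := by omega
      set b2 := B₁ - b1 with hb2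
      have hsplit : b1 + γ1 = e₀ := by omega
      obtain ⟨r, hr⟩ := hψsur (c - (A₁ : ZMod g) - φ s₀)
      have hsplitc : ((b1 : ℕ) : ZMod g) + ((γ1 : ℕ) : ZMod g) = d - c - 1 := by
        rw [← Nat.cast_add, hsplit, he₀cast]
      have hBc : ((b1 : ℕ) : ZMod g) + ((b2 : ℕ) : ZMod g) = ((B₁ : ℕ) : ZMod g) := by
        rw [← Nat.cast_add]
        congr 1
        omega
      have h1 : A (x (s₀ + ((A₁ : ℕ) : ZMod n))) (y r) := by
        rw [harc, map_add, map_natCast, hr]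
        have : φ s₀ + (A₁ : ZMod g) + (c - (A₁ : ZMod g) - φ s₀) = c := by ring
        rw [this]
        exact hc
      have h2 : A (y (r + ((b1 : ℕ) : ZMod m))) (x (s₀ + ((A₁ + 1 + γ1 : ℕ) : ZMod n))) := by
        rw [harc', map_add, map_natCast, map_add, map_natCast, hr]
        have : φ s₀ + ((A₁ + 1 + γ1 : ℕ) : ZMod g) +
            (c - (A₁ : ZMod g) - φ s₀ + ((b1 : ℕ) : ZMod g)) = d := by
          push_cast
          push_cast at hsplitc
          linear_combination hsplitc
        rw [this]
        exact hd
      have h3 : A (x (s₀ + ((A₁ + 1 + γ1 + 0 : ℕ) : ZMod n))) (y (r + ((b1 + 1 + 0 : ℕ) : ZMod m))) := by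
        rw [harc, map_add, map_natCast, map_add, map_natCast, hr]
        have : φ s₀ + ((A₁ + 1 + γ1 + 0 : ℕ) : ZMod g) +
            (c - (A₁ : ZMod g) - φ s₀ + ((b1 + 1 + 0 : ℕ) : ZMod g)) = d + 1 := by
          push_cast
          push_cast at hsplitc
          linear_combination hsplitc
        rw [this]
        exact hd1
      have h4 : A (y (r + ((b1 + 1 + 0 + b2 : ℕ) : ZMod m))) (x s₀) := by
        rw [harc', map_add, map_natCast, hr]
        have : φ s₀ + (c - (A₁ : ZMod g) - φ s₀ + ((b1 + 1 + 0 + b2 : ℕ) : ZMod g)) = c + 1 := by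
          push_cast
          push_cast at hBc hcast
          linear_combination hBc - hcast
        rw [this]
        exact hc1
      have := construct2 hxinj hyinj hxcyc hycyc hdisj s₀ r A₁ 0 b1 b2 γ1 0
        (by omega) (by omega) h1 h2 h3 h4
      have hk' : A₁ + 0 + b1 + b2 + 4 = k := by omega
      exact hk' ▸ this

end Key

/-- A strong generalized sum of two Hamiltonian digraphs with no good pair
is vertex-pancyclic. -/
theorem stmt6 {V : Type*} [Fintype V] (A : V → V → Prop) {n m : ℕ}
    (hn : 2 ≤ n) (hm : 2 ≤ m)
    (x : ZMod n → V) (y : ZMod m → V)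
    (hxinj : Function.Injective x) (hyinj : Function.Injective y)
    (hxcyc : ∀ i, A (x i) (x (i + 1))) (hycyc : ∀ i, A (y i) (y (i + 1)))
    (hdisj : ∀ s t, x s ≠ y t)
    (hcov : ∀ v : V, (∃ s, x s = v) ∨ (∃ t, y t = v))
    (hone : ∀ s t, Xor' (A (x s) (y t)) (A (y t) (x s)))
    (hstrong : ∀ u v : V, u ≠ v → Relation.ReflTransGen A u v)
    (hngp : ¬ ∃ (s : ZMod n) (r : ZMod m), A (x s) (y r) ∧ A (y (r - 1)) (x (s + 1))) :
    ∀ v : V, ∀ k : ℕ, 3 ≤ k → k ≤ Fintype.card V → CycleThru A k v := by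

  haveI : NeZero n := ⟨by omega⟩
  haveI : NeZero m := ⟨by omega⟩
  set g := Nat.gcd n m with hgdef
  have hgn : g ∣ n := Nat.gcd_dvd_left n m
  have hgm : g ∣ m := Nat.gcd_dvd_right n m
  have hg1 : 1 ≤ g := by
    rcases Nat.eq_zero_or_pos g with h | h
    · rw [h] at hgn
      have := Nat.eq_zero_of_zero_dvd hgn
      omega
    · omega
  -- the one-step shift of crossing arcs
  have step : ∀ (s : ZMod n) (r : ZMod m), A (x s) (y r) → A (x (s + 1)) (y (r - 1)) := by
    intro s r h
    rcases hone (s + 1) (r - 1) with ⟨ha, _⟩ | ⟨hb, _⟩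
    · exact ha
    · exact absurd ⟨s, r, h, hb⟩ hngp
  have iter : ∀ (t : ℕ) (s : ZMod n) (r : ZMod m), A (x s) (y r) →
      A (x (s + (t : ZMod n))) (y (r - (t : ZMod m))) := by
    intro t
    induction t with
    | zero => intro s r h; simpa using h
    | succ t ih =>
      intro s r h
      have h2 := step _ _ (ih s r h)
      have e1 : s + ((t + 1 : ℕ) : ZMod n) = s + ((t : ℕ) : ZMod n) + 1 := by push_cast; ring
      have e2 : r - ((t + 1 : ℕ) : ZMod m) = r - ((t : ℕ) : ZMod m) - 1 := by push_cast; ring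
      rw [e1, e2]
      exact h2
  set φ : ZMod n →+* ZMod g := ZMod.castHom hgn (ZMod g) with hφ
  set ψ : ZMod m →+* ZMod g := ZMod.castHom hgm (ZMod g) with hψ
  set f : ZMod g → Prop := fun w => ∃ s r, φ s + ψ r = w ∧ A (x s) (y r) with hf
  have hφv : ∀ u : ZMod n, φ u = ((u.val : ℕ) : ZMod g) := by
    intro u
    rw [hφ, ZMod.castHom_apply]
    exact (ZMod.natCast_val u).symm
  have hψv : ∀ u : ZMod m, ψ u = ((u.val : ℕ) : ZMod g) := by
    intro u
    rw [hψ, ZMod.castHom_apply]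
    exact (ZMod.natCast_val u).symm
  have harc : ∀ s r, A (x s) (y r) ↔ f (φ s + ψ r) := by
    intro s r
    constructor
    · intro h
      exact ⟨s, r, rfl, h⟩
    · rintro ⟨s', r', heq, h⟩
      have heq2 : (((s - s').val : ℕ) : ZMod g) = (((r' - r).val : ℕ) : ZMod g) := by
        rw [← hφv, ← hψv, map_sub, map_sub]
        linear_combination -heq
      have hcompat : (s - s').val ≡ (r' - r).val [MOD Nat.gcd n m] := by
        have := (ZMod.natCast_eq_natCast_iff _ _ _).mp heq2
        rwa [hgdef] at this
      obtain ⟨t, ht1, ht2⟩ := Nat.chineseRemainder' hcompat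
      have e1 : ((t : ℕ) : ZMod n) = s - s' := by
        have h' := (ZMod.natCast_eq_natCast_iff _ _ _).mpr ht1
        rw [h']
        exact ZMod.natCast_rightInverse _
      have e2 : ((t : ℕ) : ZMod m) = r' - r := by
        have h' := (ZMod.natCast_eq_natCast_iff _ _ _).mpr ht2
        rw [h']
        exact ZMod.natCast_rightInverse _
      have hit := iter t s' r' h
      have es : s' + ((t : ℕ) : ZMod n) = s := by rw [e1]; ring
      have er : r' - ((t : ℕ) : ZMod m) = r := by rw [e2]; ring
      rwa [es, er] at hit
  have harc' : ∀ s r, A (y r) (x s) ↔ ¬ f (φ s + ψ r) := by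
    intro s r
    constructor
    · intro hyx hfv
      have hxy := (harc s r).mpr hfv
      rcases hone s r with ⟨_, hb⟩ | ⟨_, hb⟩
      · exact hb hyx
      · exact hb hxy
    · intro hnf
      rcases hone s r with ⟨hxy, _⟩ | ⟨hyx, _⟩
      · exact absurd ((harc s r).mp hxy) hnf
      · exact hyx
  -- strongness gives crossing arcs in both directions
  have extract_xy : ∃ s r, A (x s) (y r) := by
    suffices H : ∀ u vv : V, Relation.ReflTransGen A u vv → (∃ s, u = x s) →
        (∃ t, vv = y t) → ∃ s r, A (x s) (y r) by
      exact H (x 0) (y 0) (hstrong _ _ (hdisj 0 0)) ⟨0, rfl⟩ ⟨0, rfl⟩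
    intro u vv h hu
    induction h with
    | refl =>
      rintro ⟨t, ht⟩
      obtain ⟨s, rfl⟩ := hu
      exact absurd ht (hdisj s t)
    | @tail b cc hab hbc ih =>
      rintro ⟨t, rfl⟩
      rcases hcov b with ⟨s', hs'⟩ | ⟨t', ht'⟩
      · exact ⟨s', t, hs' ▸ hbc⟩
      · exact ih ⟨t', ht'.symm⟩
  have extract_yx : ∃ s r, A (y r) (x s) := by
    suffices H : ∀ u vv : V, Relation.ReflTransGen A u vv → (∃ t, u = y t) →
        (∃ s, vv = x s) → ∃ s r, A (y r) (x s) by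
      exact H (y 0) (x 0) (hstrong _ _ (Ne.symm (hdisj 0 0))) ⟨0, rfl⟩ ⟨0, rfl⟩
    intro u vv h hu
    induction h with
    | refl =>
      rintro ⟨s, hs⟩
      obtain ⟨t, rfl⟩ := hu
      exact absurd hs.symm (hdisj s t)
    | @tail b cc hab hbc ih =>
      rintro ⟨s, rfl⟩
      rcases hcov b with ⟨s', hs'⟩ | ⟨t', ht'⟩
      · exact ih ⟨s', hs'.symm⟩
      · exact ⟨s, t', ht' ▸ hbc⟩
  obtain ⟨s1, r1, hxy1⟩ := extract_xy
  obtain ⟨s2, r2, hyx2⟩ := extract_yx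
  have hf1 : f (φ s1 + ψ r1) := (harc s1 r1).mp hxy1
  have hf2 : ¬ f (φ s2 + ψ r2) := (harc' s2 r2).mp hyx2
  have hg2 : 2 ≤ g := by
    by_contra hcon
    have hgeq : g = 1 := by omega
    haveI : Subsingleton (ZMod g) := by rw [hgeq]; infer_instance
    exact hf2 (Subsingleton.elim (φ s1 + ψ r1) (φ s2 + ψ r2) ▸ hf1)
  haveI : NeZero g := ⟨by omega⟩
  obtain ⟨c, hc, hc1⟩ := exists_fall f hf1 hf2
  obtain ⟨d, hd, hd1⟩ := exists_rise f hf1 hf2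
  -- the number of vertices is at most n + m
  have hcard : Fintype.card V ≤ n + m := by
    classical
    have hsub : (Finset.univ : Finset V) ⊆ Finset.univ.image x ∪ Finset.univ.image y := by
      intro v _
      rcases hcov v with ⟨s, hs⟩ | ⟨t, ht⟩
      · exact Finset.mem_union_left _ (Finset.mem_image.mpr ⟨s, Finset.mem_univ _, hs⟩)
      · exact Finset.mem_union_right _ (Finset.mem_image.mpr ⟨t, Finset.mem_univ _, ht⟩)
    calc Fintype.card V = (Finset.univ : Finset V).card := (Finset.card_univ).symm
      _ ≤ (Finset.univ.image x ∪ Finset.univ.image y).card := Finset.card_le_card hsub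
      _ ≤ (Finset.univ.image x).card + (Finset.univ.image y).card := Finset.card_union_le _ _
      _ ≤ (Finset.univ : Finset (ZMod n)).card + (Finset.univ : Finset (ZMod m)).card :=
          add_le_add Finset.card_image_le Finset.card_image_le
      _ = n + m := by rw [Finset.card_univ, Finset.card_univ, ZMod.card, ZMod.card]
  intro v k hk3 hkcard
  have hknm : k ≤ n + m := le_trans hkcard hcard
  rcases hcov v with ⟨s₀, rfl⟩ | ⟨t₀, rfl⟩
  · exact key hn hm hg2 hgn hgm hxinj hyinj hxcyc hycyc hdisj f harc harc' c d hc hc1 hd hd1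
      s₀ k hk3 hknm
  · have harc2 : ∀ (t : ZMod m) (s : ZMod n), A (y t) (x s) ↔
        (fun w => ¬ f w) (ZMod.castHom hgm (ZMod g) t + ZMod.castHom hgn (ZMod g) s) := by
      intro t s
      rw [add_comm]
      exact harc' s t
    have harc2' : ∀ (t : ZMod m) (s : ZMod n), A (x s) (y t) ↔
        ¬ (fun w => ¬ f w) (ZMod.castHom hgm (ZMod g) t + ZMod.castHom hgn (ZMod g) s) := by
      intro t s
      rw [add_comm]
      simp only [not_not]
      exact harc s t
    have := key hm hn hg2 hgm hgn hyinj hxinj hycyc hxcyc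
      (fun t s h => (hdisj s t) h.symm) (fun w => ¬ f w) harc2 harc2'
      d c hd (not_not_intro hd1) (not_not_intro hc) hc1 t₀ k hk3 (by omega)
    exact this
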